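/- No DFA over the alphabet Δ with at most two states has I as its set of reset words; consequently, since ℬ has three states and Syn(ℬ) = I, the reset complexity of I is exactly 3 and ℬ is a minimal synchronizing automaton for I. -/

import Mathlib

/-- The transition function of a DFA extended to words (read left to right). -/
def deltaStar {Q A : Type} (δ : Q → A → Q) (q : Q) (w : List A) : Q :=
  w.foldl δ q

/-- `w` is a reset word for the DFA with transition function `δ`. -/
def IsReset {Q A : Type} (δ : Q → A → Q) (w : List A) : Prop :=
  ∀ q q' : Q, deltaStar δ q w = deltaStar δ q' w

/-- The set of reset words of a DFA. -/
def Syn {Q A : Type} (δ : Q → A → Q) : Set (List A) :=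
  {w | IsReset δ w}

/-- The alphabet Δ = Σ ∪ {x,y,z}: `Sum.inl a` is a letter of Σ, and
`Sum.inr 0`, `Sum.inr 1`, `Sum.inr 2` are the new letters x, y, z. -/
abbrev Alph (σ : Type) : Type := σ ⊕ Fin 3

def xL {σ : Type} : Alph σ := Sum.inr 0
def yL {σ : Type} : Alph σ := Sum.inr 1
def zL {σ : Type} : Alph σ := Sum.inr 2

/-- `w ∈ (Σ ∪ {x})*`, i.e. `w` contains no occurrence of the letters y and z. -/
def noYZ {σ : Type} (w : List (Alph σ)) : Prop := yL ∉ w ∧ zL ∉ w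

/-- L₁ = (Σ∪{x})* y Δ* -/
def L1 {σ : Type} : Set (List (Alph σ)) :=
  {w | ∃ u v, noYZ u ∧ w = u ++ yL :: v}

/-- L₂ = (Σ∪{x})* z Δ⁺ -/
def L2 {σ : Type} : Set (List (Alph σ)) :=
  {w | ∃ u v, noYZ u ∧ v ≠ [] ∧ w = u ++ zL :: v}

/-- The ideal language I = L₁ ∪ L₂. -/
def ISet {σ : Type} : Set (List (Alph σ)) := L1 ∪ L2

/-- The 3-state DFA ℬ: states `0 = p₁`, `1 = p₂`, `2 = s` (the sink). -/
def tauB {σ : Type} (p : Fin 3) (a : Alph σ) : Fin 3 :=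
  if p = 0 then
    match a with
    | Sum.inl _ => 0                                -- τ(p₁,a) = p₁ for a ∈ Σ
    | Sum.inr k => if k = 0 then 0                  -- τ(p₁,x) = p₁
                   else if k = 1 then 2             -- τ(p₁,y) = s
                   else 1                            -- τ(p₁,z) = p₂
  else 2                                             -- τ(p₂,·) = τ(s,·) = s

/-- The reset complexity of a language `L` over the alphabet `A`: the minimal
number of states of a DFA over `A` whose set of reset words equals `L`. -/
noncomputable def rc {A : Type} (L : Set (List A)) : ℕ :=
  sInf {m | ∃ (Q : Type) (instQ : Fintype Q), Nonempty Q ∧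
    ∃ δ : Q → A → Q, @Fintype.card Q instQ = m ∧ Syn δ = L}

section Aux
variable {σ : Type}

lemma deltaStar_cons' {Q A : Type} (δ : Q → A → Q) (q : Q) (a : A) (w : List A) :
    deltaStar δ q (a :: w) = deltaStar δ (δ q a) w := rfl

lemma deltaStar_append' {Q A : Type} (δ : Q → A → Q) (q : Q) (u v : List A) :
    deltaStar δ q (u ++ v) = deltaStar δ (deltaStar δ q u) v := List.foldl_append ..

lemma tauB_sink (w : List (Alph σ)) : deltaStar tauB (2 : Fin 3) w = 2 := by
  induction w with
  | nil => rfl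
  | cons a w ih => rw [deltaStar_cons']; simpa [tauB] using ih

lemma tauB_one (w : List (Alph σ)) (hw : w ≠ []) : deltaStar tauB (1 : Fin 3) w = 2 := by
  cases w with
  | nil => exact absurd rfl hw
  | cons a w =>
    rw [deltaStar_cons']
    have : tauB (1 : Fin 3) a = 2 := by simp [tauB]
    rw [this]; exact tauB_sink w

lemma tauB_zero_letter (a : Alph σ) (hy : a ≠ yL) (hz : a ≠ zL) :
    tauB (0 : Fin 3) a = 0 := by
  cases a with
  | inl s => rfl
  | inr k =>
    fin_cases k
    · rfl
    · exact absurd rfl hy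
    · exact absurd rfl hz

lemma tauB_zero_noYZ (u : List (Alph σ)) (hu : noYZ u) :
    deltaStar tauB (0 : Fin 3) u = 0 := by
  induction u with
  | nil => rfl
  | cons a u ih =>
    obtain ⟨hy, hz⟩ := hu
    simp only [List.mem_cons, not_or] at hy hz
    rw [deltaStar_cons', tauB_zero_letter a (fun h => hy.1 h.symm) (fun h => hz.1 h.symm)]
    exact ih ⟨hy.2, hz.2⟩

lemma ISet_cons (a : Alph σ) (hy : a ≠ yL) (hz : a ≠ zL) (w : List (Alph σ))
    (hw : w ∈ ISet) : (a :: w) ∈ ISet (σ := σ) := by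
  rcases hw with ⟨u, v, hu, rfl⟩ | ⟨u, v, hu, hv, rfl⟩
  · exact Or.inl ⟨a :: u, v, ⟨by simp [hu.1, Ne.symm hy], by simp [hu.2, Ne.symm hz]⟩, rfl⟩
  · exact Or.inr ⟨a :: u, v, ⟨by simp [hu.1, Ne.symm hy], by simp [hu.2, Ne.symm hz]⟩, hv, rfl⟩

lemma ISet_of_two (w : List (Alph σ)) (h0 : deltaStar tauB (0 : Fin 3) w = 2) :
    w ∈ ISet := by
  induction w with
  | nil =>
    have h0' : (0 : Fin 3) = 2 := h0
    exact absurd h0' (by decide)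
  | cons a w ih =>
    rw [deltaStar_cons'] at h0
    cases a with
    | inl s =>
      have ht : tauB (0 : Fin 3) (Sum.inl s : Alph σ) = 0 := rfl
      rw [ht] at h0
      exact ISet_cons _ (by simp [yL]) (by simp [zL]) w (ih h0)
    | inr k =>
      by_cases k0 : k = 0
      · subst k0
        have ht : tauB (0 : Fin 3) (Sum.inr 0 : Alph σ) = 0 := rfl
        rw [ht] at h0
        exact ISet_cons _ (by simp [yL]) (by simp [zL]) w (ih h0)
      by_cases k1 : k = 1
      · subst k1
        exact Or.inl ⟨[], w, ⟨List.not_mem_nil, List.not_mem_nil⟩, rfl⟩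
      have k2 : k = 2 := by omega
      subst k2
      have ht : tauB (0 : Fin 3) (Sum.inr 2 : Alph σ) = 1 := rfl
      rw [ht] at h0
      have hw : w ≠ [] := by
        rintro rfl
        have h0' : (1 : Fin 3) = 2 := h0
        exact absurd h0' (by decide)
      exact Or.inr ⟨[], w, ⟨List.not_mem_nil, List.not_mem_nil⟩, hw, rfl⟩

lemma two_of_ISet (w : List (Alph σ)) (hw : w ∈ ISet) (q : Fin 3) :
    deltaStar tauB q w = 2 := by
  have h0 : deltaStar tauB (0 : Fin 3) w = 2 := by
    rcases hw with ⟨u, v, hu, rfl⟩ | ⟨u, v, hu, hv, rfl⟩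
    · rw [deltaStar_append', tauB_zero_noYZ u hu, deltaStar_cons']
      have ht : tauB (0 : Fin 3) (yL : Alph σ) = 2 := rfl
      rw [ht]; exact tauB_sink v
    · rw [deltaStar_append', tauB_zero_noYZ u hu, deltaStar_cons']
      have ht : tauB (0 : Fin 3) (zL : Alph σ) = 1 := rfl
      rw [ht]; exact tauB_one v hv
  have hne : w ≠ [] := by
    rintro rfl
    have h0' : (0 : Fin 3) = 2 := h0
    exact absurd h0' (by decide)
  fin_cases q
  · exact h0
  · exact tauB_one w hne
  · exact tauB_sink w

lemma syn_tauB : Syn (tauB (σ := σ)) = ISet := by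
  ext w
  constructor
  · intro hw
    have h2 : deltaStar tauB (0 : Fin 3) w = 2 := by
      rw [hw 0 2]; exact tauB_sink w
    exact ISet_of_two w h2
  · intro hw q q'
    rw [two_of_ISet w hw q, two_of_ISet w hw q']

lemma zz_mem : ([zL, zL] : List (Alph σ)) ∈ ISet :=
  Or.inr ⟨[], [zL], ⟨List.not_mem_nil, List.not_mem_nil⟩, by simp, rfl⟩

lemma z_not_mem : ([zL] : List (Alph σ)) ∉ ISet := by
  rintro (⟨u, v, hu, heq⟩ | ⟨u, v, hu, hv, heq⟩)
  · cases u with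
    | nil => simp [yL, zL] at heq
    | cons a u => simp at heq
  · cases u with
    | nil => simp at heq; exact hv heq
    | cons a u => simp at heq

end Aux
/-- No DFA over Δ with at most two states has I as its set of reset words;
consequently rc(I) = 3 and ℬ (a three-state DFA with Syn(ℬ) = I) is a minimal
synchronizing automaton for I. -/
theorem rc_I_eq_three (σ : Type) [Fintype σ] :
    (∀ (Q : Type) (instQ : Fintype Q), Nonempty Q → ∀ δ : Q → Alph σ → Q,
        @Fintype.card Q instQ ≤ 2 → Syn δ ≠ ISet) ∧
    rc (ISet (σ := σ)) = 3 ∧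
    Syn (tauB (σ := σ)) = ISet ∧
    Fintype.card (Fin 3) = rc (ISet (σ := σ)) := by
  have part1 : ∀ (Q : Type) (instQ : Fintype Q), Nonempty Q → ∀ δ : Q → Alph σ → Q,
      @Fintype.card Q instQ ≤ 2 → Syn δ ≠ ISet := by
    intro Q instQ hQ δ hcard hS
    classical
    by_cases hz : IsReset δ [zL]
    · have hmem : ([zL] : List (Alph σ)) ∈ Syn δ := hz
      rw [hS] at hmem
      exact z_not_mem hmem
    · -- δ(·,z) is injective, hence surjective
      have hinj : Function.Injective (fun q : Q => δ q zL) := by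
        intro a b hab
        by_contra hne
        apply hz
        intro q q'
        have hall : ∀ c : Q, c = a ∨ c = b := by
          intro c
          by_contra hc
          push_neg at hc
          have h3 : ({c, a, b} : Finset Q).card = 3 := by
            rw [Finset.card_insert_of_notMem (by simp [hc.1, hc.2]),
              Finset.card_insert_of_notMem (by simp [hne]), Finset.card_singleton]
          have hle : ({c, a, b} : Finset Q).card ≤ Fintype.card Q :=
            Finset.card_le_univ _
          omega
        have hab' : δ a zL = δ b zL := hab
        rcases hall q with rfl | rfl <;> rcases hall q' with rfl | rfl <;>
          simp only [deltaStar, List.foldl_cons, List.foldl_nil, hab']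
      have hsurj : Function.Surjective (fun q : Q => δ q zL) :=
        Finite.surjective_of_injective hinj
      have hzz : IsReset δ [zL, zL] := by
        have hmem : ([zL, zL] : List (Alph σ)) ∈ ISet := zz_mem
        rw [← hS] at hmem
        exact hmem
      apply hz
      intro q q'
      obtain ⟨a, ha⟩ := hsurj q
      obtain ⟨b, hb⟩ := hsurj q'
      calc deltaStar δ q [zL] = deltaStar δ a [zL, zL] := by rw [← ha]; rfl
        _ = deltaStar δ b [zL, zL] := hzz a b
        _ = deltaStar δ q' [zL] := by rw [← hb]; rfl
  have hsyn : Syn (tauB (σ := σ)) = ISet := syn_tauB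
  have h3mem : 3 ∈ {m | ∃ (Q : Type) (instQ : Fintype Q), Nonempty Q ∧
      ∃ δ : Q → Alph σ → Q, @Fintype.card Q instQ = m ∧ Syn δ = ISet (σ := σ)} :=
    ⟨Fin 3, inferInstance, ⟨0⟩, tauB, by simp, hsyn⟩
  have hrc : rc (ISet (σ := σ)) = 3 := by
    apply le_antisymm
    · exact Nat.sInf_le h3mem
    · apply le_csInf ⟨3, h3mem⟩
      rintro m ⟨Q, instQ, hQ, δ, hcard, hSyn⟩
      by_contra hm
      push_neg at hm
      exact part1 Q instQ hQ δ (by omega) hSyn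
  exact ⟨part1, hrc, hsyn, by simp [hrc]⟩
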